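/- Let F : A ⥤ B and G : B ⥤ A be functors between categories. If the algebra (X, a : G.obj (F.obj X) ⟶ X) is an initial object of the category of algebras for the endofunctor F ⋙ G of A, then the algebra (F.obj X, F.map a : F.obj (G.obj (F.obj X)) ⟶ F.obj X) is an initial object of the category of algebras for the endofunctor G ⋙ F of B. -/
import Mathlib

open CategoryTheory CategoryTheory.Limits

/-- Rolling property of initial algebras: if `(X, a)` is an initial algebra for `F ⋙ G`,
then `(F.obj X, F.map a)` is an initial algebra for `G ⋙ F`. -/
theorem initialAlgebra_roll
    {A : Type*} {B : Type*} [Category A] [Category B]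
    (F : A ⥤ B) (G : B ⥤ A) (X : A) (a : (F ⋙ G).obj X ⟶ X)
    (h : IsInitial (Endofunctor.Algebra.mk X a : Endofunctor.Algebra (F ⋙ G))) :
    Nonempty (IsInitial
      (Endofunctor.Algebra.mk (F.obj X) (F.map a) : Endofunctor.Algebra (G ⋙ F))) := by
  have la := Endofunctor.Algebra.Initial.left_inv h
  have ra := Endofunctor.Algebra.Initial.right_inv h
  set s : X ⟶ (F ⋙ G).obj X := Endofunctor.Algebra.Initial.strInv h with hs
  refine ⟨IsInitial.ofUniqueHom (fun Y => ?_) (fun Y m => ?_)⟩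
  · -- the map to an arbitrary algebra Y
    refine ⟨F.map (h.to ⟨G.obj Y.a, G.map Y.str⟩).f ≫ Y.str, ?_⟩
    have ht := (h.to (⟨G.obj Y.a, G.map Y.str⟩ : Endofunctor.Algebra (F ⋙ G))).h
    dsimp at ht ⊢
    rw [G.map_comp, F.map_comp, Category.assoc, ← Category.assoc, ← F.map_comp, ht,
      F.map_comp, Category.assoc]
  · -- uniqueness
    have hmh := m.h
    dsimp at hmh
    have hf' : (F ⋙ G).map (s ≫ G.map m.f) ≫ G.map Y.str = a ≫ (s ≫ G.map m.f) := by
      dsimp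
      rw [F.map_comp, G.map_comp, Category.assoc, ← G.map_comp, hmh, G.map_comp,
        ← Category.assoc, ← G.map_comp, ← F.map_comp, la, F.map_id, G.map_id,
        Category.id_comp, ← Category.assoc, ra]
      simp
    have := h.hom_ext (h.to ⟨G.obj Y.a, G.map Y.str⟩)
      (⟨s ≫ G.map m.f, hf'⟩ : (⟨X, a⟩ : Endofunctor.Algebra (F ⋙ G)) ⟶ ⟨G.obj Y.a, G.map Y.str⟩)
    have hfeq : (h.to ⟨G.obj Y.a, G.map Y.str⟩).f = s ≫ G.map m.f :=
      congrArg Endofunctor.Algebra.Hom.f this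
    ext
    dsimp
    rw [hfeq, F.map_comp, Category.assoc, hmh, ← Category.assoc, ← F.map_comp]
    simp only [Endofunctor.Algebra.mk] at la
    rw [la, F.map_id, Category.id_comp]
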